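/- For the star graph transition matrix P = v e_Sᵀ + e_S vᵀ/(S−1), the successor representation satisfies (I − γP)⁻¹ = I + (γ²/(1−γ²))(vvᵀ/(S−1) + e_S e_Sᵀ) + (γ/(1−γ²)) P, for γ ∈ (0,1). -/
import Mathlib


open Matrix

lemma vmv_mul {n : Type*} [Fintype n] (a b c d : n → ℝ) :
    Matrix.vecMulVec a b * Matrix.vecMulVec c d
      = (b ⬝ᵥ c) • Matrix.vecMulVec a d := by
  ext i j
  simp only [Matrix.mul_apply, Matrix.vecMulVec_apply, Matrix.smul_apply,
    dotProduct, Finset.sum_mul, smul_eq_mul]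
  apply Finset.sum_congr rfl
  intros; ring

theorem star_graph_successor_representation {S : ℕ} (hS : 2 ≤ S)
    (v e : Fin S → ℝ)
    (hv : ∀ i, v i = if (i : ℕ) = S - 1 then 0 else 1)
    (he : ∀ i, e i = if (i : ℕ) = S - 1 then 1 else 0)
    (P : Matrix (Fin S) (Fin S) ℝ)
    (hP : P = Matrix.vecMulVec v e + ((S : ℝ) - 1)⁻¹ • Matrix.vecMulVec e v)
    (γ : ℝ) (hγ : γ ∈ Set.Ioo (0 : ℝ) 1) :
    (1 - γ • P)⁻¹
      = 1 + (γ ^ 2 / (1 - γ ^ 2)) •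
          (((S : ℝ) - 1)⁻¹ • Matrix.vecMulVec v v + Matrix.vecMulVec e e)
        + (γ / (1 - γ ^ 2)) • P := by
  obtain ⟨hγ0, hγ1⟩ := hγ
  have hγ2 : (1 : ℝ) - γ ^ 2 ≠ 0 := by nlinarith
  have hS1 : (S : ℝ) - 1 ≠ 0 := by
    have : (2 : ℝ) ≤ (S : ℝ) := by exact_mod_cast hS
    linarith
  have hs : Fin.mk (S - 1) (by omega) ∈ Finset.univ (α := Fin S) := Finset.mem_univ _
  have hee : e ⬝ᵥ e = 1 := by
    simp only [dotProduct, he]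
    have key : ∀ i : Fin S, ((if (i:ℕ) = S-1 then (1:ℝ) else 0) * (if (i:ℕ) = S-1 then 1 else 0)) = if i = (⟨S-1, by omega⟩ : Fin S) then 1 else 0 := by
      intro i; by_cases h : (i:ℕ) = S-1 <;> simp [h, Fin.ext_iff]
    simp only [key, Finset.sum_ite_eq']
    simp
  have hve : v ⬝ᵥ e = 0 := by
    simp only [dotProduct, hv, he]
    apply Finset.sum_eq_zero
    intro i _
    split <;> simp
  have hev : e ⬝ᵥ v = 0 := by
    simp only [dotProduct, hv, he]
    apply Finset.sum_eq_zero
    intro i _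
    split <;> simp
  have hvv : v ⬝ᵥ v = (S : ℝ) - 1 := by
    have hv1 : ∀ i, v i = 1 - e i := by
      intro i; rw [hv, he]; split <;> ring
    simp only [dotProduct, hv1]
    have : ∀ i ∈ Finset.univ (α := Fin S), (1 - e i) * (1 - e i) = 1 - e i * e i := by
      intro i _; rw [he]; split <;> ring
    rw [Finset.sum_congr rfl this, Finset.sum_sub_distrib]
    have : ∑ i, e i * e i = e ⬝ᵥ e := rfl
    rw [this, hee]
    simp [Finset.card_univ]
  apply Matrix.inv_eq_right_inv
  subst hP
  simp only [sub_mul, mul_add, add_mul, one_mul, mul_one, smul_mul_assoc,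
    Matrix.mul_smul, Matrix.smul_mul, vmv_mul, hvv, hve, hev, hee,
    smul_smul, zero_smul, one_smul, smul_zero, smul_add, add_smul]
  match_scalars <;> field_simp <;> ring
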